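/- Let 𝒢 be an abelian semigroup of affine maps of ℂⁿ generated by f₁,…,f_p (p≥1), set G=Φ(𝒢), and suppose P∈Φ(GA(n,ℂ)) and a partition η=(n₁,…,n_r) of n+1 are such that P⁻¹GP⊂K_{η,r}(ℂ). Let u₀=(e_{1,1},…,e_{r,1})∈ℂ^{n+1} where e_{k,1}=(1,0,…,0)∈ℂ^{n_k}, let v₀=Pu₀ (which lies in {1}×ℂⁿ), and let w₀=p₂(v₀)∈ℂⁿ. Then the following are equivalent: (i) 𝒢 is hypercyclic; (ii) J_𝒢(w₀)=ℂⁿ; (iii) the orbit 𝒢(w₀) is dense in ℂⁿ. -/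

import Mathlib

open Filter Topology

/-- An affine map `x ↦ A x + a` on `ℂⁿ`, encoded by the pair `(A, a)`
    of its linear part and translation part. -/
abbrev AffMap (n : ℕ) := Matrix (Fin n) (Fin n) ℂ × (Fin n → ℂ)

/-- The action of the affine map `f = (A, a)` on a vector: `f x = A x + a`. -/
noncomputable def affApply {n : ℕ} (f : AffMap n) (x : Fin n → ℂ) : Fin n → ℂ :=
  f.1.mulVec x + f.2

/-- The composition of affine maps, as pairs: `(A,a) ∘ (B,b) = (A B, A b + a)`. -/
noncomputable def affComp {n : ℕ} (f g : AffMap n) : AffMap n :=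
  (f.1 * g.1, f.1.mulVec g.2 + f.2)

/-- The map `f₁^{k₁} ∘ f₂^{k₂} ∘ ⋯ ∘ f_p^{k_p}`. -/
noncomputable def wordApply {n p : ℕ} (f : Fin p → AffMap n) (k : Fin p → ℕ) :
    (Fin n → ℂ) → (Fin n → ℂ) :=
  (List.ofFn fun j => (affApply (f j))^[k j]).foldr (· ∘ ·) id

/-- The orbit `𝒢(x)` of `x` under the semigroup `𝒢` generated by `f₁,…,f_p`. -/
def affOrbit {n p : ℕ} (f : Fin p → AffMap n) (x : Fin n → ℂ) : Set (Fin n → ℂ) :=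
  {y | ∃ k : Fin p → ℕ, 1 ≤ ∑ j, k j ∧ wordApply f k x = y}

/-- The extended limit set `J_𝒢(x)` of the semigroup generated by `f₁,…,f_p`. -/
def Jset {n p : ℕ} (f : Fin p → AffMap n) (x : Fin n → ℂ) : Set (Fin n → ℂ) :=
  {y | ∃ (xs : ℕ → Fin n → ℂ) (k : ℕ → Fin p → ℕ),
    Tendsto xs atTop (𝓝 x) ∧
    Tendsto (fun m => ∑ j, k m j) atTop atTop ∧
    Tendsto (fun m => wordApply f (k m) (xs m)) atTop (𝓝 y)}

/-- `𝒢` is hypercyclic: some orbit is dense. -/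
def AffHypercyclic {n p : ℕ} (f : Fin p → AffMap n) : Prop :=
  ∃ v : Fin n → ℂ, Dense (affOrbit f v)

/-- The embedding `Φ : MA(n,ℂ) → M_{n+1}(ℂ)`, `(A,a) ↦ [[1,0],[a,A]]`. -/
def Phi {n : ℕ} (f : AffMap n) : Matrix (Fin (n + 1)) (Fin (n + 1)) ℂ :=
  Matrix.of fun i j =>
    Fin.cases (Fin.cases (1 : ℂ) (fun _ => 0) j)
      (fun i' => Fin.cases (f.2 i') (fun j' => f.1 i' j') j) i

/-- The matrix `B₁^{k₁} B₂^{k₂} ⋯ B_p^{k_p}`. -/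
noncomputable def wordMat {m p : ℕ} (B : Fin p → Matrix (Fin m) (Fin m) ℂ) (k : Fin p → ℕ) :
    Matrix (Fin m) (Fin m) ℂ :=
  (List.ofFn fun j => B j ^ k j).prod

/-- The index at which the `k`-th diagonal block of the partition `η` begins. -/
def blockStart {r : ℕ} (η : Fin r → ℕ) (k : Fin r) : ℕ :=
  ∑ l ∈ Finset.Iio k, η l

/-- `i` is an index belonging to the `k`-th block of the partition `η`. -/
def inBlock {r m : ℕ} (η : Fin r → ℕ) (k : Fin r) (i : Fin m) : Prop :=
  blockStart η k ≤ (i : ℕ) ∧ (i : ℕ) < blockStart η k + η k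

/-- `K_{η,r}(ℂ) = T_{n₁}(ℂ) ⊕ ⋯ ⊕ T_{n_r}(ℂ)`: block-diagonal matrices whose
    `k`-th diagonal block is lower triangular with constant diagonal. -/
def Kset (n r : ℕ) (η : Fin r → ℕ) : Set (Matrix (Fin (n + 1)) (Fin (n + 1)) ℂ) :=
  {A | (∀ i j : Fin (n + 1), (¬ ∃ k, inBlock η k i ∧ inBlock η k j) → A i j = 0) ∧
       (∀ i j : Fin (n + 1), (∃ k, inBlock η k i ∧ inBlock η k j) → (i : ℕ) < (j : ℕ) → A i j = 0) ∧
       (∀ k : Fin r, ∀ i j : Fin (n + 1), inBlock η k i → inBlock η k j → A i i = A j j)}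

/-- `U' ⊆ ℂⁿ`: those `x` such that `(1,x) ∈ ∏_k (ℂ* × ℂ^{n_k-1})`, i.e. the
    coordinate of `(1,x)` at the start of each block is nonzero. -/
def Uprime (n r : ℕ) (η : Fin r → ℕ) : Set (Fin n → ℂ) :=
  {x | ∀ k : Fin r, ∀ i : Fin (n + 1), (i : ℕ) = blockStart η k → (Fin.cons 1 x : Fin (n + 1) → ℂ) i ≠ 0}

/-- The set of scalar matrices `{λ I : λ ∈ ℂ}`. -/
def scalarMats (m : ℕ) : Set (Matrix (Fin m) (Fin m) ℂ) :=
  Set.range fun c : ℂ => c • (1 : Matrix (Fin m) (Fin m) ℂ)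

/-- The vector `u₀ = (e_{1,1}, …, e_{r,1}) ∈ ℂ^{n+1}`: coordinate `1` at the
    start of each block, `0` elsewhere. -/
noncomputable def u0vec (n r : ℕ) (η : Fin r → ℕ) : Fin (n + 1) → ℂ :=
  open Classical in
  fun i => if ∃ k : Fin r, (i : ℕ) = blockStart η k then 1 else 0


open Matrix

section Partition
variable {n r : ℕ} {η : Fin r → ℕ}

lemma blockStart_add_le {k k' : Fin r} (h : k < k') :
    blockStart η k + η k ≤ blockStart η k' := by
  have hsub : insert k (Finset.Iio k) ⊆ Finset.Iio k' := by
    intro l hl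
    rcases Finset.mem_insert.mp hl with rfl | hl
    · exact Finset.mem_Iio.mpr h
    · exact Finset.mem_Iio.mpr ((Finset.mem_Iio.mp hl).trans h)
  calc blockStart η k + η k = ∑ l ∈ insert k (Finset.Iio k), η l := by
        rw [Finset.sum_insert (by simp), add_comm]; rfl
    _ ≤ ∑ l ∈ Finset.Iio k', η l := Finset.sum_le_sum_of_subset hsub

lemma inBlock_unique {k k' : Fin r} {i : Fin (n+1)} (h : inBlock η k i)
    (h' : inBlock η k' i) : k = k' := by
  rcases lt_trichotomy k k' with hlt | he | hlt
  · exact absurd ((h.2.trans_le (blockStart_add_le hlt)).trans_le h'.1) (lt_irrefl _)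
  · exact he
  · exact absurd ((h'.2.trans_le (blockStart_add_le hlt)).trans_le h.1) (lt_irrefl _)

lemma blockStart_succ {k : Fin r} (hlt : (k : ℕ) + 1 < r) :
    blockStart η ⟨(k : ℕ) + 1, hlt⟩ = blockStart η k + η k := by
  have : Finset.Iio (⟨(k : ℕ) + 1, hlt⟩ : Fin r) = insert k (Finset.Iio k) := by
    ext l
    simp only [Finset.mem_Iio, Finset.mem_insert, Fin.lt_def]
    constructor
    · intro hl
      rcases Nat.lt_succ_iff_lt_or_eq.mp hl with h | h
      · exact Or.inr h
      · exact Or.inl (Fin.ext h)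
    · rintro (rfl | hl)
      · exact Nat.lt_succ_self _
      · exact Nat.lt_succ_of_lt hl
  rw [blockStart, this, Finset.sum_insert (by simp), add_comm]; rfl

lemma exists_inBlock (hη : ∀ k, 1 ≤ η k) (hsum : ∑ k, η k = n + 1) (i : Fin (n+1)) :
    ∃ k, inBlock η k i := by
  classical
  have hr0 : 0 < r := by
    rcases Nat.eq_zero_or_pos r with rfl | h
    · simp at hsum
    · exact h
  set F : Finset (Fin r) := Finset.univ.filter (fun k => blockStart η k ≤ (i : ℕ)) with hF
  have h0F : (⟨0, hr0⟩ : Fin r) ∈ F := by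
    have : blockStart η (⟨0, hr0⟩ : Fin r) = 0 := by
      have he : Finset.Iio (⟨0, hr0⟩ : Fin r) = ∅ := by
        ext l; simp [Fin.lt_def]
      rw [blockStart, he, Finset.sum_empty]
    simp [hF, this]
  have hne : F.Nonempty := ⟨_, h0F⟩
  set k0 := F.max' hne with hk0
  have hk0F : k0 ∈ F := F.max'_mem hne
  have h1 : blockStart η k0 ≤ (i : ℕ) := by
    simpa [hF] using hk0F
  refine ⟨k0, h1, ?_⟩
  by_contra hge
  push_neg at hge
  by_cases hlast : (k0 : ℕ) + 1 < r
  · set k1 : Fin r := ⟨(k0 : ℕ) + 1, hlast⟩ with hk1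
    have hk1F : k1 ∈ F := by
      have : blockStart η k1 = blockStart η k0 + η k0 := blockStart_succ hlast
      simp [hF, this, hge]
    have hle : k1 ≤ k0 := F.le_max' _ hk1F
    exact absurd hle (by simp [hk1, Fin.le_def])
  · have huniv : (Finset.univ : Finset (Fin r)) = insert k0 (Finset.Iio k0) := by
      ext l
      simp only [Finset.mem_univ, true_iff, Finset.mem_insert, Finset.mem_Iio, Fin.lt_def]
      have : (l : ℕ) < (k0 : ℕ) + 1 := by
        have := l.isLt; omega
      rcases Nat.lt_succ_iff_lt_or_eq.mp this with h | h
      · exact Or.inr h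
      · exact Or.inl (Fin.ext h)
    have : (n : ℕ) + 1 = blockStart η k0 + η k0 := by
      rw [← hsum, huniv, Finset.sum_insert (by simp), add_comm]; rfl
    have := i.isLt
    omega

end Partition

section KsetL
variable {n r : ℕ} {η : Fin r → ℕ}

abbrev Vn (n : ℕ) := Fin (n+1) → ℂ
abbrev Mn (n : ℕ) := Matrix (Fin (n+1)) (Fin (n+1)) ℂ

lemma Kset.lowerTri {A : Mn n} (hA : A ∈ Kset n r η) {i j : Fin (n+1)}
    (h : (i : ℕ) < (j : ℕ)) : A i j = 0 := by
  by_cases hex : ∃ k, inBlock η k i ∧ inBlock η k j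
  · exact hA.2.1 i j hex h
  · exact hA.1 i j hex

lemma Kset.mulVec_start {A : Mn n} (hA : A ∈ Kset n r η) {k : Fin r} {s : Fin (n+1)}
    (hs : inBlock η k s) (hsv : (s : ℕ) = blockStart η k) (z : Vn n) :
    (A *ᵥ z) s = A s s * z s := by
  have : (A *ᵥ z) s = ∑ j, A s j * z j := by
    simp [Matrix.mulVec, dotProduct]
  rw [this]
  apply Finset.sum_eq_single s
  · intro j _ hj
    rcases lt_trichotomy ((s : ℕ)) ((j : ℕ)) with hlt | he | hlt
    · rw [Kset.lowerTri hA hlt, zero_mul]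
    · exact absurd (Fin.ext he.symm) hj
    · have : ¬ ∃ k'', inBlock η k'' s ∧ inBlock η k'' j := by
        rintro ⟨k'', h1, h2⟩
        have hk : k'' = k := inBlock_unique h1 hs
        subst hk
        have := h2.1
        omega
      rw [hA.1 s j this, zero_mul]
  · intro h; exact absurd (Finset.mem_univ s) h

lemma u0vec_start {k : Fin r} {i : Fin (n+1)} (h : (i : ℕ) = blockStart η k) :
    u0vec n r η i = 1 := by
  rw [u0vec, if_pos ⟨k, h⟩]

lemma blockStart_zero (hr0 : 0 < r) : blockStart η (⟨0, hr0⟩ : Fin r) = 0 := by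
  have he : Finset.Iio (⟨0, hr0⟩ : Fin r) = ∅ := by
    ext l; simp [Fin.lt_def]
  rw [blockStart, he, Finset.sum_empty]

lemma u0vec_zero (hr0 : 0 < r) : u0vec n r η 0 = 1 :=
  u0vec_start (k := ⟨0, hr0⟩) (by rw [blockStart_zero hr0]; rfl)

lemma Kset.one_mem (hη : ∀ k, 1 ≤ η k) (hsum : ∑ k, η k = n + 1) :
    (1 : Mn n) ∈ Kset n r η := by
  refine ⟨fun i j hn => ?_, fun i j _ hij => ?_, fun k i j _ _ => ?_⟩
  · apply Matrix.one_apply_ne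
    rintro rfl
    obtain ⟨k, hk⟩ := exists_inBlock hη hsum i
    exact hn ⟨k, hk, hk⟩
  · exact Matrix.one_apply_ne (fun he => by subst he; omega)
  · simp

lemma Kset.zero_mem : (0 : Mn n) ∈ Kset n r η := by
  refine ⟨fun i j _ => rfl, fun i j _ _ => rfl, fun k i j _ _ => rfl⟩

lemma Kset.add_mem {A B : Mn n} (hA : A ∈ Kset n r η) (hB : B ∈ Kset n r η) :
    A + B ∈ Kset n r η := by
  refine ⟨fun i j hn => ?_, fun i j he hij => ?_, fun k i j h1 h2 => ?_⟩
  · simp [Matrix.add_apply, hA.1 i j hn, hB.1 i j hn]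
  · simp [Matrix.add_apply, hA.2.1 i j he hij, hB.2.1 i j he hij]
  · simp [Matrix.add_apply, hA.2.2 k i j h1 h2, hB.2.2 k i j h1 h2]

lemma Kset.smul_mem (c : ℂ) {A : Mn n} (hA : A ∈ Kset n r η) :
    c • A ∈ Kset n r η := by
  refine ⟨fun i j hn => ?_, fun i j he hij => ?_, fun k i j h1 h2 => ?_⟩
  · simp [Matrix.smul_apply, hA.1 i j hn]
  · simp [Matrix.smul_apply, hA.2.1 i j he hij]
  · simp [Matrix.smul_apply, hA.2.2 k i j h1 h2]

lemma span_mem_Kset (hη : ∀ k, 1 ≤ η k) (hsum : ∑ k, η k = n + 1)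
    {S : Set (Mn n)} (hSK : ∀ N ∈ S, N ∈ Kset n r η) {B : Mn n}
    (hB : B ∈ Submodule.span ℂ (S ∪ {1})) : B ∈ Kset n r η := by
  induction hB using Submodule.span_induction with
  | mem x hx =>
      rcases hx with hx | hx
      · exact hSK x hx
      · rw [Set.mem_singleton_iff.mp hx]; exact Kset.one_mem hη hsum
  | zero => exact Kset.zero_mem
  | add x y _ _ hx hy => exact Kset.add_mem hx hy
  | smul c x _ hx => exact Kset.smul_mem c hx

lemma span_comm {S : Set (Mn n)} (hS : ∀ N ∈ S, ∀ N' ∈ S, N * N' = N' * N)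
    {N : Mn n} (hN : N ∈ S) {B : Mn n}
    (hB : B ∈ Submodule.span ℂ (S ∪ {1})) : N * B = B * N := by
  induction hB using Submodule.span_induction with
  | mem x hx =>
      rcases hx with hx | hx
      · exact hS N hN x hx
      · rw [Set.mem_singleton_iff.mp hx]; simp
  | zero => simp
  | add x y _ _ hx hy => rw [Matrix.mul_add, Matrix.add_mul, hx, hy]
  | smul c x _ hx => rw [Matrix.mul_smul, Matrix.smul_mul, hx]

lemma continuous_mulVec (A : Mn n) : Continuous (fun z : Vn n => A *ᵥ z) := by
  have h := LinearMap.continuous_of_finiteDimensional (Matrix.mulVecLin A)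
  exact h

end KsetL

section PhiL
variable {n : ℕ}

@[simp] lemma Phi_zero_zero (g : AffMap n) : Phi g 0 0 = 1 := rfl
@[simp] lemma Phi_zero_succ (g : AffMap n) (j : Fin n) : Phi g 0 j.succ = 0 := rfl
@[simp] lemma Phi_succ_zero (g : AffMap n) (i : Fin n) : Phi g i.succ 0 = g.2 i := rfl
@[simp] lemma Phi_succ_succ (g : AffMap n) (i j : Fin n) : Phi g i.succ j.succ = g.1 i j := rfl

lemma Phi_mulVec_cons (g : AffMap n) (x : Fin n → ℂ) :
    Phi g *ᵥ (Fin.cons 1 x) = Fin.cons 1 (affApply g x) := by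
  funext i
  have hm : (Phi g *ᵥ (Fin.cons 1 x)) i = ∑ j, Phi g i j * (Fin.cons 1 x : Fin (n+1) → ℂ) j := by
    simp [Matrix.mulVec, dotProduct]
  rw [hm, Fin.sum_univ_succ]
  induction i using Fin.cases with
  | zero => simp
  | succ i' =>
      simp only [Phi_succ_zero, Phi_succ_succ, Fin.cons_zero, Fin.cons_succ, mul_one]
      simp [affApply, Matrix.mulVec, dotProduct, add_comm]

lemma Phi_mul (f g : AffMap n) : Phi (affComp f g) = Phi f * Phi g := by
  ext i j
  have hm : (Phi f * Phi g) i j = ∑ l, Phi f i l * Phi g l j := by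
    simp [Matrix.mul_apply]
  rw [hm, Fin.sum_univ_succ]
  induction i using Fin.cases with
  | zero =>
      induction j using Fin.cases with
      | zero => simp
      | succ j' => simp
  | succ i' =>
      induction j using Fin.cases with
      | zero => simp [affComp, Matrix.mulVec, dotProduct, add_comm]
      | succ j' => simp [affComp, Matrix.mul_apply]

lemma Phi_id : Phi ((1 : Matrix (Fin n) (Fin n) ℂ), (0 : Fin n → ℂ)) = 1 := by
  ext i j
  induction i using Fin.cases with
  | zero =>
      induction j using Fin.cases with
      | zero => simp [Matrix.one_apply]
      | succ j' => simp [Matrix.one_apply, Fin.succ_ne_zero j' |>.symm]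
  | succ i' =>
      induction j using Fin.cases with
      | zero => simp [Matrix.one_apply, Fin.succ_ne_zero i']
      | succ j' => simp [Matrix.one_apply, Fin.succ_inj]

lemma Phi_mulVec_zero (g : AffMap n) (z : Fin (n+1) → ℂ) :
    (Phi g *ᵥ z) 0 = z 0 := by
  have hm : (Phi g *ᵥ z) 0 = ∑ j, Phi g 0 j * z j := by
    simp [Matrix.mulVec, dotProduct]
  rw [hm, Fin.sum_univ_succ]
  simp

lemma list_prod_mulVec_zero : ∀ (l : List (Matrix (Fin (n+1)) (Fin (n+1)) ℂ)),
    (∀ M ∈ l, ∀ z : Fin (n+1) → ℂ, (M *ᵥ z) 0 = z 0) → ∀ z : Fin (n+1) → ℂ,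
    (l.prod *ᵥ z) 0 = z 0 := by
  intro l
  induction l with
  | nil => intro h z; simp
  | cons hd tl ih =>
      intro h z
      rw [List.prod_cons, ← Matrix.mulVec_mulVec]
      rw [h hd List.mem_cons_self _]
      exact ih (fun M hM => h M (List.mem_cons_of_mem hd hM)) z

lemma pow_mulVec_cons (g : AffMap n) (m : ℕ) (x : Fin n → ℂ) :
    (Phi g) ^ m *ᵥ (Fin.cons 1 x) = Fin.cons 1 ((affApply g)^[m] x) := by
  induction m generalizing x with
  | zero => simp
  | succ m ih =>
      rw [pow_succ, ← Matrix.mulVec_mulVec, Phi_mulVec_cons, ih,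
        Function.iterate_succ_apply]

lemma prod_mulVec_cons {p : ℕ} (F : Fin p → (Fin n → ℂ) → (Fin n → ℂ))
    (M : Fin p → Matrix (Fin (n+1)) (Fin (n+1)) ℂ)
    (hc : ∀ j x, M j *ᵥ (Fin.cons 1 x) = Fin.cons 1 (F j x)) (x : Fin n → ℂ) :
    (List.ofFn M).prod *ᵥ (Fin.cons 1 x) =
      Fin.cons 1 (((List.ofFn F).foldr (· ∘ ·) id) x) := by
  induction p with
  | zero => simp [List.ofFn_zero]
  | succ p ih =>
      rw [List.ofFn_succ, List.ofFn_succ, List.prod_cons, List.foldr_cons,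
        ← Matrix.mulVec_mulVec, ih (fun j => F j.succ) (fun j => M j.succ)
          (fun j x => hc j.succ x), hc 0]
      rfl

lemma wordMat_mulVec_cons {p : ℕ} (f : Fin p → AffMap n) (k : Fin p → ℕ) (x : Fin n → ℂ) :
    wordMat (fun j => Phi (f j)) k *ᵥ (Fin.cons 1 x) = Fin.cons 1 (wordApply f k x) := by
  rw [wordMat, wordApply]
  exact prod_mulVec_cons (fun j => (affApply (f j))^[k j]) (fun j => (Phi (f j)) ^ (k j))
    (fun j x => pow_mulVec_cons (f j) (k j) x) x

lemma wordMat_mul {p m : ℕ} (B : Fin p → Matrix (Fin m) (Fin m) ℂ)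
    (hB : ∀ i j, B i * B j = B j * B i) (k l : Fin p → ℕ) :
    wordMat B k * wordMat B l = wordMat B (fun j => k j + l j) := by
  induction p with
  | zero => simp [wordMat, List.ofFn_zero]
  | succ p ih =>
      have hcomm : Commute ((B 0) ^ (l 0)) ((List.ofFn fun j : Fin p => B j.succ ^ k j.succ).prod) := by
        apply Commute.list_prod_right
        intro x hx
        rw [List.mem_ofFn] at hx
        obtain ⟨j, rfl⟩ := hx
        exact Commute.pow_pow (hB 0 j.succ) _ _
      rw [wordMat, wordMat, wordMat, List.ofFn_succ, List.ofFn_succ, List.ofFn_succ,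
        List.prod_cons, List.prod_cons, List.prod_cons]
      have ihs := ih (fun j => B j.succ) (fun i j => hB i.succ j.succ)
        (fun j => k j.succ) (fun j => l j.succ)
      rw [wordMat, wordMat, wordMat] at ihs
      calc B 0 ^ k 0 * (List.ofFn fun j : Fin p => B j.succ ^ k j.succ).prod *
            (B 0 ^ l 0 * (List.ofFn fun j : Fin p => B j.succ ^ l j.succ).prod)
          = B 0 ^ k 0 * (B 0 ^ l 0 * (List.ofFn fun j : Fin p => B j.succ ^ k j.succ).prod) *
            (List.ofFn fun j : Fin p => B j.succ ^ l j.succ).prod := by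
            rw [hcomm.eq]; noncomm_ring
      _ = (B 0 ^ (k 0 + l 0)) * ((List.ofFn fun j : Fin p => B j.succ ^ k j.succ).prod *
            (List.ofFn fun j : Fin p => B j.succ ^ l j.succ).prod) := by
            rw [pow_add]; noncomm_ring
      _ = B 0 ^ (k 0 + l 0) * (List.ofFn fun j : Fin p => B j.succ ^ (k j.succ + l j.succ)).prod := by
            rw [ihs]

end PhiL

section CoreB
variable {n r : ℕ} {η : Fin r → ℕ}

lemma r_pos (hsum : ∑ k, η k = n + 1) : 0 < r := by
  rcases Nat.eq_zero_or_pos r with rfl | h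
  · simp at hsum
  · exact h

lemma inBlock_zero (hη : ∀ k, 1 ≤ η k) (hr0 : 0 < r) :
    inBlock η (⟨0, hr0⟩ : Fin r) (0 : Fin (n+1)) := by
  constructor
  · rw [blockStart_zero hr0]; exact Nat.zero_le _
  · rw [blockStart_zero hr0]
    simpa [Nat.pos_iff_ne_zero, ← Nat.one_le_iff_ne_zero] using hη _

/-- The evaluation `A ↦ A *ᵥ ζ` as a linear map. -/
noncomputable def evVec {n : ℕ} (ζ : Vn n) : Mn n →ₗ[ℂ] Vn n where
  toFun A := A *ᵥ ζ
  map_add' A B := Matrix.add_mulVec A B ζ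
  map_smul' c A := Matrix.smul_mulVec c A ζ

lemma span_orbit_top (S : Set (Mn n)) (ζ : Vn n)
    (hdense : ∀ w : Vn n, w 0 = 1 → w ∈ closure {y | ∃ N ∈ S, y = N *ᵥ ζ}) :
    Submodule.span ℂ {y | ∃ N ∈ S, y = N *ᵥ ζ} = ⊤ := by
  set V := Submodule.span ℂ {y | ∃ N ∈ S, y = N *ᵥ ζ} with hV
  have hclosed : IsClosed (V : Set (Vn n)) := Submodule.closed_of_finiteDimensional V
  have hsub : closure {y | ∃ N ∈ S, y = N *ᵥ ζ} ⊆ (V : Set (Vn n)) :=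
    closure_minimal Submodule.subset_span hclosed
  have hH : ∀ w' : Vn n, w' 0 = 1 → w' ∈ V := fun w' h => hsub (hdense w' h)
  set d0 : Vn n := fun i => if i = 0 then 1 else 0 with hd0
  have hd0m : d0 ∈ V := hH d0 (by simp [hd0])
  have hsingle : ∀ j : Fin (n+1), (fun i => if i = j then (1:ℂ) else 0) ∈ V := by
    intro j
    by_cases hj : j = 0
    · subst hj; exact hd0m
    · have h1 : (d0 + fun i => if i = j then (1:ℂ) else 0) ∈ V := by
        apply hH
        simp [hd0, if_neg (Ne.symm hj)]
      have := V.sub_mem h1 hd0m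
      simpa using this
  rw [Submodule.eq_top_iff']
  intro x
  have hx : x = ∑ j, x j • (fun i => if i = j then (1:ℂ) else 0) := by
    funext i
    simp [Finset.sum_apply, Finset.sum_ite_eq' Finset.univ i x]
  rw [hx]
  exact V.sum_mem fun j _ => V.smul_mem (x j) (hsingle j)

theorem coreB (hη : ∀ k, 1 ≤ η k) (hsum : ∑ k, η k = n + 1)
    (S : Set (Mn n)) (hSK : ∀ N ∈ S, N ∈ Kset n r η)
    (hScomm : ∀ N ∈ S, ∀ N' ∈ S, N * N' = N' * N)
    (ζ : Vn n) (hζ0 : ζ 0 = 1)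
    (hdense : ∀ w : Vn n, w 0 = 1 → w ∈ closure {y | ∃ N ∈ S, y = N *ᵥ ζ})
    (w : Vn n) (hw : w 0 = 1) :
    w ∈ closure {y | ∃ N ∈ S, y = N *ᵥ u0vec n r η} := by
  have hr0 : 0 < r := r_pos hsum
  set 𝒜 := Submodule.span ℂ (S ∪ {1}) with h𝒜
  -- obtain A ∈ 𝒜 with A *ᵥ ζ = u0vec
  have hmap : u0vec n r η ∈ Submodule.map (evVec ζ) 𝒜 := by
    have hle : Submodule.span ℂ {y | ∃ N ∈ S, y = N *ᵥ ζ} ≤ Submodule.map (evVec ζ) 𝒜 := by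
      apply Submodule.span_le.mpr
      rintro y ⟨N, hN, rfl⟩
      exact ⟨N, Submodule.subset_span (Or.inl hN), rfl⟩
    rw [span_orbit_top S ζ hdense] at hle
    exact hle Submodule.mem_top
  obtain ⟨A, hA𝒜, hAζ⟩ := hmap
  have hAζ' : A *ᵥ ζ = u0vec n r η := hAζ
  have hAK : A ∈ Kset n r η := span_mem_Kset hη hsum hSK hA𝒜
  have hk0 : inBlock η (⟨0, hr0⟩ : Fin r) (0 : Fin (n+1)) := inBlock_zero hη hr0
  have h00 : ((0 : Fin (n+1)) : ℕ) = blockStart η ⟨0, hr0⟩ := by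
    rw [blockStart_zero hr0]; rfl
  -- diagonal entries nonzero
  have hdiag : ∀ i : Fin (n+1), A i i ≠ 0 := by
    intro i
    obtain ⟨k, hk⟩ := exists_inBlock hη hsum i
    have hslt : blockStart η k < n + 1 := lt_of_le_of_lt hk.1 i.isLt
    set s : Fin (n+1) := ⟨blockStart η k, hslt⟩ with hsdef
    have hsb : inBlock η k s := by
      refine ⟨le_refl _, ?_⟩
      have := hη k
      simp only [hsdef]
      omega
    have h1 : (A *ᵥ ζ) s = A s s * ζ s := Kset.mulVec_start hAK hsb rfl ζ
    have h2 : (A *ᵥ ζ) s = 1 := by rw [hAζ']; exact u0vec_start (k := k) rfl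
    have hAss : A s s ≠ 0 := left_ne_zero_of_mul (h1 ▸ h2 ▸ one_ne_zero)
    rw [hAK.2.2 k i s hk hsb]
    exact hAss
  -- A 0 0 = 1
  have hA00 : A 0 0 = 1 := by
    have h1 : (A *ᵥ ζ) 0 = A 0 0 * ζ 0 := Kset.mulVec_start hAK hk0 h00 ζ
    rw [hAζ', u0vec_zero hr0, hζ0, mul_one] at h1
    exact h1.symm
  -- invertibility
  have hlow : A.BlockTriangular (OrderDual.toDual : Fin (n+1) → (Fin (n+1))ᵒᵈ) := by
    intro i j hij
    exact Kset.lowerTri hAK hij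
  have hdet : IsUnit A.det := by
    rw [Matrix.det_of_lowerTriangular A hlow]
    rw [isUnit_iff_ne_zero]
    exact Finset.prod_ne_zero_iff.mpr fun i _ => hdiag i
  have hAinv : A * A⁻¹ = 1 := Matrix.mul_nonsing_inv A hdet
  set w' := A⁻¹ *ᵥ w with hw'def
  have hAw' : A *ᵥ w' = w := by
    rw [hw'def, Matrix.mulVec_mulVec, hAinv, Matrix.one_mulVec]
  have hw'0 : w' 0 = 1 := by
    have h1 : (A *ᵥ w') 0 = A 0 0 * w' 0 := Kset.mulVec_start hAK hk0 h00 w'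
    rw [hAw', hw, hA00, one_mul] at h1
    exact h1.symm
  have hmem : w' ∈ closure {y | ∃ N ∈ S, y = N *ᵥ ζ} := hdense w' hw'0
  have himg : w ∈ closure ((fun y => A *ᵥ y) '' {y | ∃ N ∈ S, y = N *ᵥ ζ}) :=
    image_closure_subset_closure_image (continuous_mulVec A) ⟨w', hmem, hAw'⟩
  refine closure_mono ?_ himg
  rintro y ⟨y', ⟨N, hN, rfl⟩, rfl⟩
  refine ⟨N, hN, ?_⟩
  show A *ᵥ (N *ᵥ ζ) = N *ᵥ u0vec n r η
  rw [Matrix.mulVec_mulVec, ← span_comm hScomm hN hA𝒜, ← Matrix.mulVec_mulVec, hAζ']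

end CoreB
section CoreA
variable {n r : ℕ} {η : Fin r → ℕ}

theorem keyInj (hη : ∀ k, 1 ≤ η k) (hsum : ∑ k, η k = n + 1)
    (S : Set (Mn n)) (hSK : ∀ N ∈ S, N ∈ Kset n r η)
    (hScomm : ∀ N ∈ S, ∀ N' ∈ S, N * N' = N' * N)
    (hJ : ∀ w : Vn n, w 0 = 1 → ∃ (z : ℕ → Vn n) (N : ℕ → Mn n),
      (∀ m, N m ∈ S) ∧ Tendsto z atTop (𝓝 (u0vec n r η)) ∧
      Tendsto (fun m => N m *ᵥ z m) atTop (𝓝 w))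
    (B : Mn n) (hB𝒜 : B ∈ Submodule.span ℂ (S ∪ {1}))
    (hBu : B *ᵥ u0vec n r η = 0) : B = 0 := by
  classical
  by_contra hB0
  have hex : ∃ i : ℕ, ∃ h : i < n + 1, B ⟨i, h⟩ ≠ 0 := by
    by_contra hc
    push_neg at hc
    apply hB0
    ext i j
    have h0 : B ⟨(i : ℕ), i.isLt⟩ = 0 := hc (i : ℕ) i.isLt
    have h1 : B i = 0 := by simpa using h0
    rw [h1]
    rfl
  set i0 : ℕ := Nat.find hex with hi0
  obtain ⟨hlt, hrow⟩ := Nat.find_spec hex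
  set iF : Fin (n+1) := ⟨i0, hlt⟩ with hiF
  have hmin : ∀ l : Fin (n+1), (l : ℕ) < i0 → B l = 0 := by
    intro l hl
    have hnm := Nat.find_min hex hl
    push_neg at hnm
    have h2 := hnm l.isLt
    simpa using h2
  obtain ⟨k, hk⟩ := exists_inBlock hη hsum iF
  have hslt : blockStart η k < n + 1 := lt_of_le_of_lt hk.1 iF.isLt
  set s : Fin (n+1) := ⟨blockStart η k, hslt⟩ with hsdef
  have hsb : inBlock η k s := by
    refine ⟨le_refl _, ?_⟩
    have := hη k
    simp only [hsdef]
    omega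
  have hrowid : ∀ N ∈ S, ∀ z : Vn n,
      (B *ᵥ (N *ᵥ z)) iF = N iF iF * (B *ᵥ z) iF := by
    intro N hN z
    have hcomm : N * B = B * N := span_comm hScomm hN hB𝒜
    have h1 : B *ᵥ (N *ᵥ z) = N *ᵥ (B *ᵥ z) := by
      rw [Matrix.mulVec_mulVec, Matrix.mulVec_mulVec, hcomm]
    rw [h1]
    have h2 : (N *ᵥ (B *ᵥ z)) iF = ∑ j, N iF j * (B *ᵥ z) j := by
      simp [Matrix.mulVec, dotProduct]
    rw [h2]
    apply Finset.sum_eq_single iF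
    · intro j _ hj
      rcases lt_trichotomy ((iF : ℕ)) ((j : ℕ)) with hlt2 | he | hlt2
      · rw [Kset.lowerTri (hSK N hN) hlt2, zero_mul]
      · exact absurd (Fin.ext he.symm) hj
      · have hBz : (B *ᵥ z) j = 0 := by
          have hrj : B j = 0 := hmin j hlt2
          have he2 : (B *ᵥ z) j = ∑ l, B j l * z l := by
            simp [Matrix.mulVec, dotProduct]
          rw [he2]
          apply Finset.sum_eq_zero
          intro l _
          rw [show B j l = 0 from by rw [hrj]; rfl, zero_mul]
        rw [hBz, mul_zero]
    · intro h; exact absurd (Finset.mem_univ _) h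
  have hkill : ∀ w : Vn n, w 0 = 1 → (B *ᵥ w) iF = 0 := by
    intro w hw
    obtain ⟨z, N, hNS, hz, hNz⟩ := hJ w hw
    have hcontB : Continuous (fun y : Vn n => (B *ᵥ y) iF) :=
      (continuous_apply iF).comp (continuous_mulVec B)
    have T1 : Tendsto (fun m => (B *ᵥ (N m *ᵥ z m)) iF) atTop (𝓝 ((B *ᵥ w) iF)) :=
      (hcontB.tendsto w).comp hNz
    have Tγ : Tendsto (fun m => (B *ᵥ z m) iF) atTop (𝓝 0) := by
      have h := (hcontB.tendsto _).comp hz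
      rw [hBu] at h
      simpa [Function.comp_def] using h
    have Tα : Tendsto (fun m => (N m *ᵥ z m) s) atTop (𝓝 (w s)) :=
      ((continuous_apply s).tendsto w).comp hNz
    have Tζ : Tendsto (fun m => z m s) atTop (𝓝 1) := by
      have h := ((continuous_apply s).tendsto _).comp hz
      rw [show u0vec n r η s = 1 from u0vec_start (k := k) rfl] at h
      exact h
    have hne : ∀ᶠ m in atTop, z m s ≠ 0 := Tζ.eventually_ne one_ne_zero
    have hId : ∀ᶠ m in atTop, (B *ᵥ (N m *ᵥ z m)) iF
        = (N m *ᵥ z m) s * (B *ᵥ z m) iF / (z m s) := by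
      filter_upwards [hne] with m hm
      have h1 : (N m *ᵥ z m) s = N m s s * z m s :=
        Kset.mulVec_start (hSK _ (hNS m)) hsb rfl _
      have h2 : N m s s = N m iF iF := (hSK _ (hNS m)).2.2 k s iF hsb hk
      rw [hrowid _ (hNS m), h1, h2, eq_div_iff hm]
      ring
    have T2 : Tendsto (fun m => (N m *ᵥ z m) s * (B *ᵥ z m) iF / (z m s)) atTop
        (𝓝 (w s * 0 / 1)) := (Tα.mul Tγ).div Tζ one_ne_zero
    have := tendsto_nhds_unique (T1.congr' hId) (by simpa using T2)
    simpa using this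
  apply hrow
  funext j
  have hbase := hkill (fun i => if i = 0 then 1 else 0) (by simp)
  have hbase' : B iF 0 = 0 := by
    have he : (B *ᵥ fun i => if i = 0 then (1:ℂ) else 0) iF = B iF 0 := by
      simp [Matrix.mulVec, dotProduct]
    rwa [he] at hbase
  by_cases hj : j = 0
  · subst hj; exact hbase'
  · have hkj := hkill (fun i => (if i = 0 then 1 else 0) + (if i = j then 1 else 0))
      (by simp [if_neg (Ne.symm hj)])
    have he : (B *ᵥ fun i => (if i = 0 then (1:ℂ) else 0) + (if i = j then 1 else 0)) iF
        = B iF 0 + B iF j := by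
      simp [Matrix.mulVec, dotProduct, mul_add, Finset.sum_add_distrib]
    rw [he, hbase', zero_add] at hkj
    exact hkj

set_option maxHeartbeats 2000000 in
theorem coreA (hη : ∀ k, 1 ≤ η k) (hsum : ∑ k, η k = n + 1)
    (S : Set (Mn n)) (hSK : ∀ N ∈ S, N ∈ Kset n r η)
    (hScomm : ∀ N ∈ S, ∀ N' ∈ S, N * N' = N' * N)
    (hJ : ∀ w : Vn n, w 0 = 1 → ∃ (z : ℕ → Vn n) (N : ℕ → Mn n),
      (∀ m, N m ∈ S) ∧ Tendsto z atTop (𝓝 (u0vec n r η)) ∧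
      Tendsto (fun m => N m *ᵥ z m) atTop (𝓝 w))
    (w : Vn n) (hw : w 0 = 1) :
    w ∈ closure {y | ∃ N ∈ S, y = N *ᵥ u0vec n r η} := by
  classical
  have hker : LinearMap.ker ((evVec (u0vec n r η)).comp
      (Submodule.span ℂ (S ∪ {1})).subtype) = ⊥ := by
    rw [LinearMap.ker_eq_bot']
    rintro ⟨A, hA⟩ hA0
    have hz : A *ᵥ u0vec n r η = 0 := hA0
    exact Subtype.ext (keyInj hη hsum S hSK hScomm hJ A hA hz)
  obtain ⟨g, hg⟩ := LinearMap.exists_leftInverse_of_injective _ hker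
  set G : Vn n →ₗ[ℂ] Mn n := (Submodule.span ℂ (S ∪ {1})).subtype.comp g with hGdef
  have hGN : ∀ N ∈ S, G (N *ᵥ u0vec n r η) = N := by
    intro N hN
    have hmem : N ∈ Submodule.span ℂ (S ∪ {1}) := Submodule.subset_span (Or.inl hN)
    have h1 := LinearMap.ext_iff.mp hg ⟨N, hmem⟩
    have h2 : g (((evVec (u0vec n r η)).comp
        (Submodule.span ℂ (S ∪ {1})).subtype) ⟨N, hmem⟩) = ⟨N, hmem⟩ := h1
    calc G (N *ᵥ u0vec n r η)
        = (Submodule.span ℂ (S ∪ {1})).subtype (g (((evVec (u0vec n r η)).comp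
            (Submodule.span ℂ (S ∪ {1})).subtype) ⟨N, hmem⟩)) := rfl
      _ = N := by rw [h2]; rfl
  set β : Vn n →L[ℂ] (Vn n →L[ℂ] Vn n) :=
    LinearMap.toContinuousLinearMap
      ((LinearMap.toContinuousLinearMap.toLinearMap).comp
        ((Matrix.toLin'.toLinearMap).comp G)) with hβdef
  have hβ : ∀ v d : Vn n, β v d = (G v) *ᵥ d := fun v d => rfl
  obtain ⟨z, N, hNS, hz, hNz⟩ := hJ w hw
  set δ : ℕ → Vn n := fun m => z m - u0vec n r η with hδ
  have hδ0 : Tendsto δ atTop (𝓝 0) := by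
    have h := hz.sub (tendsto_const_nhds (x := u0vec n r η))
    simpa [hδ] using h
  set v : ℕ → Vn n := fun m => N m *ᵥ u0vec n r η with hv
  have hIdm : ∀ m, N m *ᵥ z m = v m + β (v m) (δ m) := by
    intro m
    rw [hβ]
    simp only [hv]
    rw [hGN _ (hNS m)]
    simp only [hδ]
    rw [Matrix.mulVec_sub]
    abel
  have hC : ∀ᶠ m in atTop, ‖N m *ᵥ z m‖ ≤ ‖w‖ + 1 :=
    Filter.Tendsto.eventually_le_const (lt_add_one ‖w‖) hNz.norm
  have hsmall : ∀ᶠ m in atTop, ‖β‖ * ‖δ m‖ ≤ 1/2 := by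
    have hδn := (tendsto_const_nhds (x := ‖β‖)).mul hδ0.norm
    have hδn' : Tendsto (fun m => ‖β‖ * ‖δ m‖) atTop (𝓝 0) := by simpa using hδn
    exact Filter.Tendsto.eventually_le_const (by norm_num : (0:ℝ) < 1/2) hδn' 
  have hble : ∀ m, ‖β (v m) (δ m)‖ ≤ ‖β‖ * ‖v m‖ * ‖δ m‖ := by
    intro m
    calc ‖β (v m) (δ m)‖ ≤ ‖β (v m)‖ * ‖δ m‖ := (β (v m)).le_opNorm _
      _ ≤ ‖β‖ * ‖v m‖ * ‖δ m‖ := by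
          have := β.le_opNorm (v m)
          exact mul_le_mul_of_nonneg_right this (norm_nonneg _)
  have hvb : ∀ᶠ m in atTop, ‖v m‖ ≤ 2 * (‖w‖ + 1) := by
    filter_upwards [hC, hsmall] with m h1 h2
    have heq : v m = N m *ᵥ z m - β (v m) (δ m) := by rw [hIdm m]; abel
    have h3 : ‖v m‖ ≤ ‖N m *ᵥ z m‖ + ‖β (v m) (δ m)‖ := by
      conv_lhs => rw [heq]
      exact norm_sub_le (N m *ᵥ z m) (β (v m) (δ m))
    have h4 := hble m
    nlinarith [norm_nonneg (v m), norm_nonneg (δ m), norm_nonneg (N m *ᵥ z m),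
      norm_nonneg (β (v m) (δ m)), ContinuousLinearMap.opNorm_nonneg β]
  have hβ0 : Tendsto (fun m => β (v m) (δ m)) atTop (𝓝 0) := by
    apply squeeze_zero_norm' (a := fun m => ‖β‖ * (2 * (‖w‖ + 1)) * ‖δ m‖)
    · filter_upwards [hvb] with m hm
      calc ‖β (v m) (δ m)‖ ≤ ‖β‖ * ‖v m‖ * ‖δ m‖ := hble m
        _ ≤ ‖β‖ * (2 * (‖w‖ + 1)) * ‖δ m‖ := by
            apply mul_le_mul_of_nonneg_right _ (norm_nonneg _)
            exact mul_le_mul_of_nonneg_left hm (ContinuousLinearMap.opNorm_nonneg β)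
    · have h := tendsto_const_nhds (x := ‖β‖ * (2 * (‖w‖ + 1))) |>.mul hδ0.norm
      simpa [mul_assoc] using h
  have hvw : Tendsto v atTop (𝓝 w) := by
    have h := hNz.sub hβ0
    rw [sub_zero] at h
    apply h.congr
    intro m
    rw [hIdm m]
    abel
  exact mem_closure_of_tendsto hvw (Filter.Eventually.of_forall fun m => ⟨N m, hNS m, rfl⟩)

end CoreA
set_option maxHeartbeats 2000000

/-- **Corollary 1.2.** With `𝒢`, `G = Φ(𝒢)`, `P = Φ(φ)` and the partition `η` as
in Theorem 1.1 (`P⁻¹ G P ⊆ K_{η,r}(ℂ)`), let `u₀ = (e_{1,1},…,e_{r,1})`,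
`v₀ = P u₀ ∈ {1}×ℂⁿ` and `w₀ = p₂(v₀)`. The following are equivalent:
(i) `𝒢` is hypercyclic; (ii) `J_𝒢(w₀)=ℂⁿ`; (iii) `𝒢(w₀)` is dense in `ℂⁿ`. -/
theorem hypercyclic_iff_Jset_w0_iff_dense_orbit_w0
    (n p r : ℕ) (hp : 1 ≤ p) (hr : 1 ≤ r)
    (η : Fin r → ℕ) (hη : ∀ k, 1 ≤ η k) (hsum : ∑ k, η k = n + 1)
    (f : Fin p → AffMap n)
    (hcomm : ∀ i j, affComp (f i) (f j) = affComp (f j) (f i))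
    (φ : AffMap n) (hφ : IsUnit φ.1)
    (hconj : ∀ k : Fin p → ℕ, 1 ≤ ∑ j, k j →
      (Phi φ)⁻¹ * wordMat (fun j => Phi (f j)) k * Phi φ ∈ Kset n r η)
    (w₀ : Fin n → ℂ)
    (hw₀ : ∀ i : Fin n, w₀ i = (Phi φ).mulVec (u0vec n r η) i.succ) :
    (AffHypercyclic f ↔ Jset f w₀ = Set.univ) ∧
      (Jset f w₀ = Set.univ ↔ Dense (affOrbit f w₀)) := by
  classical
  have hr0 : 0 < r := hr
  have hdet : IsUnit φ.1.det := (Matrix.isUnit_iff_isUnit_det φ.1).mp hφ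
  have hBA : φ.1⁻¹ * φ.1 = 1 := Matrix.nonsing_inv_mul φ.1 hdet
  have hAB : φ.1 * φ.1⁻¹ = 1 := Matrix.mul_nonsing_inv φ.1 hdet
  set ginv : AffMap n := (φ.1⁻¹, -(φ.1⁻¹ *ᵥ φ.2)) with hginv
  set P : Mn n := Phi φ with hPdef
  set Q : Mn n := Phi ginv with hQdef
  have hcompQP : affComp ginv φ = ((1 : Matrix (Fin n) (Fin n) ℂ), (0 : Fin n → ℂ)) := by
    refine Prod.ext ?_ ?_
    · exact hBA
    · show φ.1⁻¹ *ᵥ φ.2 + -(φ.1⁻¹ *ᵥ φ.2) = 0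
      exact add_neg_cancel _
  have hcompPQ : affComp φ ginv = ((1 : Matrix (Fin n) (Fin n) ℂ), (0 : Fin n → ℂ)) := by
    refine Prod.ext ?_ ?_
    · exact hAB
    · show φ.1 *ᵥ (-(φ.1⁻¹ *ᵥ φ.2)) + φ.2 = 0
      rw [Matrix.mulVec_neg, Matrix.mulVec_mulVec, hAB, Matrix.one_mulVec]
      exact neg_add_cancel _
  have hQP : Q * P = 1 := by
    rw [hQdef, hPdef, ← Phi_mul, hcompQP, Phi_id]
  have hPQ : P * Q = 1 := by
    rw [hQdef, hPdef, ← Phi_mul, hcompPQ, Phi_id]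
  set W : (Fin p → ℕ) → Mn n := fun k => wordMat (fun j => Phi (f j)) k with hWdef
  have hWcomm : ∀ k l, W k * W l = W (fun j => k j + l j) :=
    fun k l => wordMat_mul _ (fun i j => by rw [← Phi_mul, hcomm i j, Phi_mul]) k l
  set S : Set (Mn n) := {A | ∃ k : Fin p → ℕ, 1 ≤ ∑ j, k j ∧ A = Q * (W k * P)} with hSdef
  have hinv : (Phi φ)⁻¹ = Q := Matrix.inv_eq_left_inv hQP
  have hSK : ∀ N ∈ S, N ∈ Kset n r η := by
    rintro N ⟨k, hk, rfl⟩
    have h := hconj k hk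
    rw [hinv] at h
    simpa [Matrix.mul_assoc] using h
  have hmix : ∀ X Y : Mn n, (Q * (X * P)) * (Q * (Y * P)) = Q * ((X * Y) * P) := by
    intro X Y
    have h1 : (Q * (X * P)) * (Q * (Y * P)) = Q * (X * ((P * Q) * (Y * P))) := by
      simp only [Matrix.mul_assoc]
    rw [h1, hPQ, Matrix.one_mul]
    simp only [Matrix.mul_assoc]
  have hScomm : ∀ N ∈ S, ∀ N' ∈ S, N * N' = N' * N := by
    rintro N ⟨k, hk, rfl⟩ N' ⟨l, hl, rfl⟩
    rw [hmix, hmix, hWcomm, hWcomm]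
    have : (fun j => k j + l j) = fun j => l j + k j := funext fun j => Nat.add_comm _ _
    rw [this]
  have hu0P : P *ᵥ u0vec n r η = Fin.cons 1 w₀ := by
    funext i
    induction i using Fin.cases with
    | zero =>
        rw [Fin.cons_zero, hPdef]
        rw [Phi_mulVec_zero, u0vec_zero hr0]
    | succ i' =>
        rw [Fin.cons_succ]
        exact (hw₀ i').symm
  set ψ : (Fin n → ℂ) → Vn n := fun x => Q *ᵥ Fin.cons 1 x with hψdef
  set π : Vn n → (Fin n → ℂ) := fun z => fun i => (P *ᵥ z) i.succ with hπdef
  have hcψ : Continuous ψ := by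
    apply (continuous_mulVec Q).comp
    apply continuous_pi
    intro i
    refine Fin.cases ?_ ?_ i
    · simpa using (continuous_const : Continuous fun _ : Fin n → ℂ => (1:ℂ))
    · intro j
      simpa using continuous_apply j
  have hcπ : Continuous π := by
    apply continuous_pi
    intro i
    exact (continuous_apply i.succ).comp (continuous_mulVec P)
  have hπψ : ∀ x, π (ψ x) = x := by
    intro x
    funext i
    show (P *ᵥ (Q *ᵥ Fin.cons 1 x)) i.succ = x i
    rw [Matrix.mulVec_mulVec, hPQ, Matrix.one_mulVec, Fin.cons_succ]
  have hψπ : ∀ z : Vn n, z 0 = 1 → ψ (π z) = z := by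
    intro z hz
    show Q *ᵥ Fin.cons 1 (fun i => (P *ᵥ z) i.succ) = z
    have hcons : (Fin.cons 1 (fun i => (P *ᵥ z) i.succ) : Vn n) = P *ᵥ z := by
      funext i
      induction i using Fin.cases with
      | zero => rw [Fin.cons_zero, hPdef, Phi_mulVec_zero, hz]
      | succ i' => rw [Fin.cons_succ]
    rw [hcons, Matrix.mulVec_mulVec, hQP, Matrix.one_mulVec]
  have hψw0 : ψ w₀ = u0vec n r η := by
    show Q *ᵥ Fin.cons 1 w₀ = u0vec n r η
    rw [← hu0P, Matrix.mulVec_mulVec, hQP, Matrix.one_mulVec]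
  have hψ0 : ∀ x, (ψ x) 0 = 1 := by
    intro x
    show (Q *ᵥ Fin.cons 1 x) 0 = 1
    rw [hQdef, Phi_mulVec_zero, Fin.cons_zero]
  have horb : ∀ (k : Fin p → ℕ) (x : Fin n → ℂ),
      (Q * (W k * P)) *ᵥ ψ x = ψ (wordApply f k x) := by
    intro k x
    show (Q * (W k * P)) *ᵥ (Q *ᵥ Fin.cons 1 x) = Q *ᵥ Fin.cons 1 (wordApply f k x)
    rw [Matrix.mulVec_mulVec]
    have h1 : Q * (W k * P) * Q = Q * W k := by
      simp only [Matrix.mul_assoc, hPQ, Matrix.mul_one]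
    rw [h1, ← Matrix.mulVec_mulVec, hWdef]
    rw [wordMat_mulVec_cons]
  have hDD : (∀ w : Vn n, w 0 = 1 → w ∈ closure {y | ∃ N ∈ S, y = N *ᵥ u0vec n r η}) →
      Dense (affOrbit f w₀) := by
    intro h y
    have hyJ := h (ψ y) (hψ0 y)
    have h2 : π (ψ y) ∈ π '' closure {y | ∃ N ∈ S, y = N *ᵥ u0vec n r η} := ⟨_, hyJ, rfl⟩
    have h3 := image_closure_subset_closure_image hcπ h2
    rw [hπψ y] at h3
    refine closure_mono ?_ h3
    rintro t ⟨y', ⟨N, ⟨k, hk, rfl⟩, rfl⟩, rfl⟩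
    refine ⟨k, hk, ?_⟩
    have he := horb k w₀
    rw [hψw0] at he
    rw [he, hπψ]
  have I1 : AffHypercyclic f → Dense (affOrbit f w₀) := by
    rintro ⟨v, hv⟩
    apply hDD
    intro w hw
    refine coreB hη hsum S hSK hScomm (ψ v) (hψ0 v) ?_ w hw
    intro w' hw'
    have h1 : π w' ∈ closure (affOrbit f v) := hv (π w')
    have h2 : ψ (π w') ∈ ψ '' closure (affOrbit f v) := ⟨_, h1, rfl⟩
    have h3 := image_closure_subset_closure_image hcψ h2
    rw [hψπ w' hw'] at h3
    refine closure_mono ?_ h3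
    rintro t ⟨x, ⟨k, hk, rfl⟩, rfl⟩
    exact ⟨Q * (W k * P), ⟨k, hk, rfl⟩, (horb k v).symm⟩
  have I2 : Jset f w₀ = Set.univ → Dense (affOrbit f w₀) := by
    intro hJu
    apply hDD
    intro w hw
    refine coreA hη hsum S hSK hScomm ?_ w hw
    intro w' hw'
    have hyJ : π w' ∈ Jset f w₀ := by rw [hJu]; trivial
    obtain ⟨xs, k, h1, h2, h3⟩ := hyJ
    obtain ⟨M₀, hM₀⟩ := Filter.eventually_atTop.mp (h2.eventually_ge_atTop 1)
    refine ⟨fun m => ψ (xs (m + M₀)), fun m => Q * (W (k (m + M₀)) * P), ?_, ?_, ?_⟩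
    · intro m
      exact ⟨k (m + M₀), hM₀ _ (Nat.le_add_left _ _), rfl⟩
    · rw [← hψw0]
      exact (hcψ.tendsto w₀).comp (h1.comp (Filter.tendsto_add_atTop_nat M₀))
    · have he : ∀ m, (Q * (W (k (m + M₀)) * P)) *ᵥ (ψ (xs (m + M₀)))
          = ψ (wordApply f (k (m + M₀)) (xs (m + M₀))) := fun m => horb _ _
      rw [show w' = ψ (π w') from (hψπ w' hw').symm]
      refine Tendsto.congr (fun m => (he m).symm) ?_
      exact (hcψ.tendsto _).comp (h3.comp (Filter.tendsto_add_atTop_nat M₀))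
  have I3 : Dense (affOrbit f w₀) → Jset f w₀ = Set.univ := by
    intro hd
    apply Set.eq_univ_iff_forall.mpr
    intro y
    rcases Nat.eq_zero_or_pos n with hn0 | hn
    · subst hn0
      haveI : Subsingleton (Fin 0 → ℂ) := ⟨fun a b => funext fun i => i.elim0⟩
      refine ⟨fun _ => w₀, fun m => fun _ => m, tendsto_const_nhds, ?_, ?_⟩
      · apply Filter.tendsto_atTop_mono (f := fun m : ℕ => m) ?_ tendsto_id
        intro m
        calc m = 1 * m := (one_mul m).symm
          _ ≤ p * m := Nat.mul_le_mul_right m hp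
          _ = ∑ _j : Fin p, m := by
              rw [Finset.sum_const, Finset.card_univ, Fintype.card_fin, smul_eq_mul]
      · have hconst : (fun m : ℕ => wordApply f (fun _ => m) w₀) = fun _ => y :=
          funext fun m => Subsingleton.elim _ _
        rw [hconst]
        exact tendsto_const_nhds
    · haveI : Nontrivial (Fin n → ℂ) := by
        refine ⟨0, Pi.single ⟨0, hn⟩ 1, fun hcon => ?_⟩
        have := congrFun hcon ⟨0, hn⟩
        simp [Pi.single_apply] at this
      have hchoice : ∀ m : ℕ, ∃ kk : Fin p → ℕ,
          (m + 1 ≤ ∑ j, kk j) ∧ dist (wordApply f kk w₀) y < 1 / ((m : ℝ) + 1) := by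
        intro m
        set F : Set (Fin n → ℂ) :=
          (fun t : Fin p → Fin (m + 1) => wordApply f (fun j => (t j : ℕ)) w₀) '' Set.univ with hF
        have hFfin : F.Finite := Set.finite_univ.image _
        have hd' : Dense (affOrbit f w₀ \ F) := hd.diff_finite hFfin
        have hball := Metric.mem_closure_iff.mp (hd' y) (1 / ((m : ℝ) + 1)) (by positivity)
        obtain ⟨pt, ⟨⟨kk, hkk1, hkkeq⟩, hptF⟩, hdist⟩ := hball
        refine ⟨kk, ?_, ?_⟩
        · by_contra hlt
          push_neg at hlt
          apply hptF
          refine ⟨fun j => ⟨kk j, ?_⟩, Set.mem_univ _, ?_⟩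
          · have hle : kk j ≤ ∑ j', kk j' :=
              Finset.single_le_sum (fun _ _ => Nat.zero_le _) (Finset.mem_univ j)
            omega
          · simpa using hkkeq
        · rw [hkkeq]
          rw [dist_comm]
          exact hdist
      choose kk hk1 hk2 using hchoice
      refine ⟨fun _ => w₀, kk, tendsto_const_nhds, ?_, ?_⟩
      · apply Filter.tendsto_atTop_mono (f := fun m : ℕ => m + 1) ?_ ?_
        · exact hk1
        · exact Filter.tendsto_atTop_mono (fun m => Nat.le_succ m) tendsto_id
      · rw [Metric.tendsto_atTop]
        intro ε' hε'
        obtain ⟨M, hM⟩ := exists_nat_one_div_lt hε'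
        refine ⟨M, fun m hm => ?_⟩
        calc dist (wordApply f (kk m) w₀) y < 1 / ((m : ℝ) + 1) := hk2 m
          _ ≤ 1 / ((M : ℝ) + 1) := by
              apply one_div_le_one_div_of_le
              · positivity
              · exact_mod_cast Nat.succ_le_succ hm
          _ < ε' := hM
  exact ⟨⟨fun h => I3 (I1 h), fun h => ⟨w₀, I2 h⟩⟩, ⟨I2, I3⟩⟩
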